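/- arXiv:2101.03572 — 2 statements merged into one kernel-verified Lean document; each statement's English description precedes it below -/
import Mathlib

section
/- Let B, C, R : ℝ → ℝ with B continuous on an interval I, and let f be twice differentiable and nonvanishing on I with f'' + B·f' + C·f = 0 on I. Let E' = B on I, let G be differentiable with G' = exp(E)·f·R on I, and let W be differentiable with W' = exp(-E)·G/f² on I. Then y = f·W satisfies y'' + B·y' + C·y = R on I. -/
/-- Variation of parameters via integrating factors: given a nonvanishing
complementary solution `f`, `y = f · W` (with `W' = exp(-E) G / f²`,
`G' = exp(E) f R`, `E' = B`) solves `y'' + B y' + C y = R`. -/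
theorem variation_of_parameters
    (B C R f f' f'' E G W : ℝ → ℝ) (I : Set ℝ) (hI : IsOpen I)
    (hBcont : ContinuousOn B I)
    (hf : ∀ x ∈ I, HasDerivAt f (f' x) x)
    (hf' : ∀ x ∈ I, HasDerivAt f' (f'' x) x)
    (hf0 : ∀ x ∈ I, f x ≠ 0)
    (hode : ∀ x ∈ I, f'' x + B x * f' x + C x * f x = 0)
    (hE : ∀ x ∈ I, HasDerivAt E (B x) x)
    (hG : ∀ x ∈ I, HasDerivAt G (Real.exp (E x) * f x * R x) x)
    (hW : ∀ x ∈ I, HasDerivAt W (Real.exp (-E x) * G x / f x ^ 2) x) :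
    ∀ x ∈ I,
      HasDerivAt (fun t => f t * W t) (deriv (fun t => f t * W t) x) x ∧
      HasDerivAt (deriv (fun t => f t * W t))
        (R x - B x * deriv (fun t => f t * W t) x - C x * (f x * W x)) x := by
  set D : ℝ → ℝ := fun t => f' t * W t + Real.exp (-E t) * G t / f t with hD
  have hy : ∀ x ∈ I, HasDerivAt (fun t => f t * W t) (D x) x := by
    intro x hx
    have h : HasDerivAt (fun t => f t * W t) _ x := (hf x hx).mul (hW x hx)
    convert h using 1
    have h0 := hf0 x hx
    simp only [hD]
    field_simp
  intro x hx
  have hderiv : deriv (fun t => f t * W t) x = D x := (hy x hx).deriv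
  refine ⟨hderiv ▸ hy x hx, ?_⟩
  -- second derivative
  have hexp : HasDerivAt (fun t => Real.exp (-E t)) (Real.exp (-E x) * (-B x)) x :=
    (hE x hx).neg.exp
  have hnum : HasDerivAt (fun t => Real.exp (-E t) * G t) _ x := hexp.mul (hG x hx)
  have hdiv := hnum.div (hf x hx) (hf0 x hx)
  have ht1 : HasDerivAt (fun t => f' t * W t) _ x := (hf' x hx).mul (hW x hx)
  have hDd := ht1.add hdiv
  have hEq : D =ᶠ[nhds x] deriv (fun t => f t * W t) := by
    filter_upwards [hI.mem_nhds hx] with t ht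
    exact ((hy t ht).deriv).symm
  have hfin : HasDerivAt (deriv (fun t => f t * W t)) _ x := hDd.congr_of_eventuallyEq hEq.symm
  rw [hderiv]
  convert hfin using 1
  have h0 := hf0 x hx
  have hode' : f'' x = -(B x * f' x) - C x * f x := by linarith [hode x hx]
  have hee : Real.exp (-E x) * Real.exp (E x) = 1 := by
    rw [← Real.exp_add]; simp
  simp only [hD]
  rw [hode']
  field_simp
  linear_combination (-(R x * f x ^ 2)) * hee
end

section
/- Let B, C : ℝ → ℝ and suppose y is a solution on an interval I of y'' + B·y' + C·y = 0 obtained by the formula y = (C₁/h)·W + C₂/h, where h is nonvanishing differentiable with h' = Q·h, W' = h/g, g nonvanishing differentiable with g' = (B-Q)·g, and Q differentiable with Q' = Q² - B·Q + C on I. Then for any constants C₁, C₂ ∈ ℝ, y satisfies y'' + B·y' + C·y = 0 on I. -/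
/-- Homogeneous part of the main formula: `y = (C₁/h)·W + C₂/h`, with
`W' = h/g`, `h' = Q h`, `g' = (B-Q) g` and `Q` solving the Riccati equation,
solves `y'' + B y' + C y = 0`. -/
theorem homogeneous_solution_formula
    (B C Q g h W : ℝ → ℝ) (C₁ C₂ : ℝ) (I : Set ℝ) (hI : IsOpen I)
    (hQ : ∀ x ∈ I, HasDerivAt Q (Q x ^ 2 - B x * Q x + C x) x)
    (hh : ∀ x ∈ I, HasDerivAt h (Q x * h x) x)
    (hh0 : ∀ x ∈ I, h x ≠ 0)
    (hg : ∀ x ∈ I, HasDerivAt g ((B x - Q x) * g x) x)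
    (hg0 : ∀ x ∈ I, g x ≠ 0)
    (hW : ∀ x ∈ I, HasDerivAt W (h x / g x) x) :
    ∀ x ∈ I,
      HasDerivAt (fun t => C₁ / h t * W t + C₂ / h t)
        (deriv (fun t => C₁ / h t * W t + C₂ / h t) x) x ∧
      HasDerivAt (deriv (fun t => C₁ / h t * W t + C₂ / h t))
        (-(B x * deriv (fun t => C₁ / h t * W t + C₂ / h t) x)
          - C x * (C₁ / h x * W x + C₂ / h x)) x := by
  set y : ℝ → ℝ := fun t => C₁ / h t * W t + C₂ / h t with hy
  have key : ∀ x ∈ I, HasDerivAt y (-(Q x) * y x + C₁ / g x) x := by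
    intro x hx
    have h1 : HasDerivAt (fun t => C₁ / h t)
        ((0 * h x - C₁ * (Q x * h x)) / h x ^ 2) x :=
      (hasDerivAt_const x C₁).div (hh x hx) (hh0 x hx)
    have h2 : HasDerivAt (fun t => C₂ / h t)
        ((0 * h x - C₂ * (Q x * h x)) / h x ^ 2) x :=
      (hasDerivAt_const x C₂).div (hh x hx) (hh0 x hx)
    have h3 := (h1.mul (hW x hx)).add h2
    refine h3.congr_deriv ?_
    have hhx := hh0 x hx; have hgx := hg0 x hx
    simp only [hy]
    field_simp
    ring
  have hdy : ∀ t ∈ I, deriv y t = -(Q t) * y t + C₁ / g t :=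
    fun t ht => (key t ht).deriv
  intro x hx
  refine ⟨(key x hx).differentiableAt.hasDerivAt, ?_⟩
  -- second derivative
  have hz : HasDerivAt (fun t => -(Q t) * y t + C₁ / g t)
      ((-(Q x ^ 2 - B x * Q x + C x)) * y x
        + (-(Q x)) * (-(Q x) * y x + C₁ / g x)
        + (0 * g x - C₁ * ((B x - Q x) * g x)) / g x ^ 2) x := by
    exact (((hQ x hx).neg.mul (key x hx)).add
      ((hasDerivAt_const x C₁).div (hg x hx) (hg0 x hx)))
  have heq : deriv y =ᶠ[nhds x] fun t => -(Q t) * y t + C₁ / g t := by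
    filter_upwards [hI.mem_nhds hx] with t ht using hdy t ht
  have hz2 : HasDerivAt (deriv y)
      ((-(Q x ^ 2 - B x * Q x + C x)) * y x
        + (-(Q x)) * (-(Q x) * y x + C₁ / g x)
        + (0 * g x - C₁ * ((B x - Q x) * g x)) / g x ^ 2) x :=
    hz.congr_of_eventuallyEq heq
  convert hz2 using 1
  rw [hdy x hx]
  have hgx := hg0 x hx
  have hyx : y x = C₁ / h x * W x + C₂ / h x := rfl
  rw [← hyx]
  field_simp
  ring
end
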